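/- Let Γ be a countable type with a graph distance 𝐝 : Γ → Γ → ℕ satisfying the metric axioms, let A be a complete normed ring, let b > 0, 0 < p < 1 and N ≥ 0. Let Φ be a map from finite subsets of Γ to A with Φ(∅) = 0 such that for every x ∈ Γ the family (‖Φ(X)‖·exp(b·D(X)^p))_{X ∋ x, X nonempty finite} is summable with sum at most N. Let O ∈ A and let Z ⊆ Γ be finite and nonempty, and assume the commutator [Φ(X), O] = Φ(X)·O − O·Φ(X) vanishes whenever X ∩ Z = ∅. Then the family ([Φ(X), O]), indexed by all nonempty finite subsets X of Γ, is summable in A and ‖∑_X [Φ(X), O]‖ ≤ 2·‖O‖·|Z|·N. -/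

import Mathlib

/-- The diameter `D(X) = max {𝐝(x,y) : x, y ∈ X}` of a finite subset of `Γ`. -/
def finsetDiam {Γ : Type*} (dist : Γ → Γ → ℕ) (X : Finset Γ) : ℕ :=
  X.sup fun x => X.sup fun y => dist x y

/-- Convergence of the commutator sum defining the derivation `δ^Φ(O)` on local observables:
if `|||Φ|||_b ≤ N`, `O` is an observable and `[Φ(X), O] = 0` whenever `X ∩ Z = ∅` for a finite
nonempty `Z`, then `∑_X [Φ(X), O]` converges and its norm is at most `2 ‖O‖ |Z| N`. -/
theorem commutator_sum_converges {Γ : Type*} [Countable Γ] (dist : Γ → Γ → ℕ)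
    (hdist0 : ∀ x y : Γ, dist x y = 0 ↔ x = y)
    (hsymm : ∀ x y : Γ, dist x y = dist y x)
    (htri : ∀ x y z : Γ, dist x z ≤ dist x y + dist y z)
    {A : Type*} [NormedRing A] [CompleteSpace A]
    (b p N : ℝ) (hb : 0 < b) (hp0 : 0 < p) (hp1 : p < 1) (hN : 0 ≤ N)
    (Φ : Finset Γ → A) (hΦempty : Φ ∅ = 0)
    (hΦ : ∀ x : Γ,
      Summable (fun X : {X : Finset Γ // x ∈ X} =>
        ‖Φ X.1‖ * Real.exp (b * (finsetDiam dist X.1 : ℝ) ^ p)) ∧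
      ∑' X : {X : Finset Γ // x ∈ X},
        ‖Φ X.1‖ * Real.exp (b * (finsetDiam dist X.1 : ℝ) ^ p) ≤ N)
    (O : A) (Z : Finset Γ) (hZ : Z.Nonempty)
    (hcomm : ∀ X : Finset Γ, Disjoint X Z → Φ X * O - O * Φ X = 0) :
    Summable (fun X : {X : Finset Γ // X.Nonempty} => Φ X.1 * O - O * Φ X.1) ∧
    ‖∑' X : {X : Finset Γ // X.Nonempty}, (Φ X.1 * O - O * Φ X.1)‖ ≤
      2 * ‖O‖ * Z.card * N := by
  classical
  set f : Finset Γ → A := fun X => Φ X * O - O * Φ X with hfdef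
  -- per-site norm summability
  have hΦn : ∀ z : Γ, Summable (fun X : {X : Finset Γ // z ∈ X} => ‖Φ X.1‖) ∧
      ∑' X : {X : Finset Γ // z ∈ X}, ‖Φ X.1‖ ≤ N := by
    intro z
    obtain ⟨hs, hle⟩ := hΦ z
    have hb1 : ∀ X : {X : Finset Γ // z ∈ X},
        ‖Φ X.1‖ ≤ ‖Φ X.1‖ * Real.exp (b * (finsetDiam dist X.1 : ℝ) ^ p) := by
      intro X
      nth_rewrite 1 [← mul_one ‖Φ X.1‖]
      have : (1:ℝ) ≤ Real.exp (b * (finsetDiam dist X.1 : ℝ) ^ p) :=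
        Real.one_le_exp (by positivity)
      exact mul_le_mul_of_nonneg_left this (norm_nonneg _)
    have hsum : Summable (fun X : {X : Finset Γ // z ∈ X} => ‖Φ X.1‖) :=
      Summable.of_nonneg_of_le (fun _ => norm_nonneg _) hb1 hs
    exact ⟨hsum, (Summable.tsum_le_tsum hb1 hsum hs).trans hle⟩
  set S : Set (Finset Γ) := {X | (X ∩ Z).Nonempty} with hSdef
  set g : Finset Γ → ℝ := fun X => 2 * ‖O‖ * ‖Φ X‖ with hgdef
  set G : (Σ z : Z, {X : Finset Γ // (z : Γ) ∈ X}) → ℝ :=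
    fun q => 2 * ‖O‖ * ‖Φ q.2.1‖ with hGdef
  have hG : Summable G := by
    refine (summable_sigma_of_nonneg (fun q => by positivity)).2 ⟨?_, ?_⟩
    · exact fun z => ((hΦn z).1).mul_left _
    · exact Summable.of_finite
  -- the injection
  set ι : S → (Σ z : Z, {X : Finset Γ // (z : Γ) ∈ X}) :=
    fun X => ⟨⟨X.2.choose, (Finset.mem_inter.1 X.2.choose_spec).2⟩,
      ⟨X.1, (Finset.mem_inter.1 X.2.choose_spec).1⟩⟩ with hιdef
  have hιinj : Function.Injective ι := by
    intro X Y h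
    have : X.1 = Y.1 := congrArg (fun q => q.2.1) h
    exact Subtype.ext this
  have hGι : ∀ X : S, g X.1 = G (ι X) := fun X => rfl
  have hgS : Summable (fun X : S => g X.1) := by
    have := hG.comp_injective hιinj
    exact this.congr (fun X => (hGι X).symm)
  have hgind : Summable (S.indicator g) := summable_subtype_iff_indicator.1 hgS
  have hfg : ∀ X : Finset Γ, ‖f X‖ ≤ S.indicator g X := by
    intro X
    by_cases hX : X ∈ S
    · rw [Set.indicator_of_mem hX]
      calc ‖Φ X * O - O * Φ X‖ ≤ ‖Φ X * O‖ + ‖O * Φ X‖ := norm_sub_le _ _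
        _ ≤ ‖Φ X‖ * ‖O‖ + ‖O‖ * ‖Φ X‖ :=
            add_le_add (norm_mul_le _ _) (norm_mul_le _ _)
        _ = 2 * ‖O‖ * ‖Φ X‖ := by ring
    · rw [Set.indicator_of_notMem hX]
      have hdisj : Disjoint X Z := by
        rw [Finset.disjoint_iff_inter_eq_empty]
        exact Finset.not_nonempty_iff_eq_empty.1 hX
      simp [hfdef, hcomm X hdisj]
  have hfsum : Summable f := Summable.of_norm_bounded hgind hfg
  have hfnorm : Summable (fun X => ‖f X‖) :=
    Summable.of_nonneg_of_le (fun _ => norm_nonneg _) hfg hgind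
  constructor
  · exact hfsum.subtype _
  · have hsupp : Function.support f ⊆ {X : Finset Γ | X.Nonempty} := by
      intro X hX
      by_contra h
      have : X = ∅ := Finset.not_nonempty_iff_eq_empty.1 h
      apply hX
      simp [hfdef, this, hΦempty]
    have h1 : ∑' X : {X : Finset Γ // X.Nonempty}, (Φ X.1 * O - O * Φ X.1)
        = ∑' X : Finset Γ, f X := tsum_subtype_eq_of_support_subset hsupp
    rw [h1]
    have h2 : ‖∑' X : Finset Γ, f X‖ ≤ ∑' X, ‖f X‖ := norm_tsum_le_tsum_norm hfnorm
    have h3 : ∑' X, ‖f X‖ ≤ ∑' X, S.indicator g X := Summable.tsum_le_tsum hfg hfnorm hgind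
    have h4 : ∑' X, S.indicator g X = ∑' X : S, g X.1 := (tsum_subtype S g).symm
    have h5 : ∑' X : S, g X.1 ≤ ∑' q, G q :=
      Summable.tsum_le_tsum_of_inj ι hιinj (fun q _ => by positivity)
        (fun X => le_of_eq (hGι X)) hgS hG
    have h6 : ∑' q, G q = ∑ z : Z, ∑' X : {X : Finset Γ // (z : Γ) ∈ X}, G ⟨z, X⟩ := by
      rw [Summable.tsum_sigma hG]
      exact tsum_fintype _
    have h7 : ∀ z : Z, ∑' X : {X : Finset Γ // (z : Γ) ∈ X}, G ⟨z, X⟩ ≤ 2 * ‖O‖ * N := by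
      intro z
      have : ∑' X : {X : Finset Γ // (z : Γ) ∈ X}, G ⟨z, X⟩
          = 2 * ‖O‖ * ∑' X : {X : Finset Γ // (z : Γ) ∈ X}, ‖Φ X.1‖ := tsum_mul_left
      rw [this]
      exact mul_le_mul_of_nonneg_left (hΦn z).2 (by positivity)
    have h8 : ∑ z : Z, ∑' X : {X : Finset Γ // (z : Γ) ∈ X}, G ⟨z, X⟩
        ≤ Z.card * (2 * ‖O‖ * N) := by
      calc ∑ z : Z, ∑' X : {X : Finset Γ // (z : Γ) ∈ X}, G ⟨z, X⟩
          ≤ ∑ _z : Z, 2 * ‖O‖ * N := Finset.sum_le_sum (fun z _ => h7 z)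
        _ = Z.card * (2 * ‖O‖ * N) := by
            rw [Finset.sum_const, Finset.card_univ, Fintype.card_coe, nsmul_eq_mul]
    calc ‖∑' X : Finset Γ, f X‖ ≤ ∑' X, ‖f X‖ := h2
      _ ≤ ∑' X, S.indicator g X := h3
      _ = ∑' X : S, g X.1 := h4
      _ ≤ ∑' q, G q := h5
      _ = ∑ z : Z, ∑' X : {X : Finset Γ // (z : Γ) ∈ X}, G ⟨z, X⟩ := h6
      _ ≤ Z.card * (2 * ‖O‖ * N) := h8
      _ = 2 * ‖O‖ * Z.card * N := by ring
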